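/- Every JSBAF (satisfying the structural restrictions) has at least one admissible labeling. -/
import Mathlib


namespace JS

inductive Lab : Type
  | IN | OUT | UNDEC
deriving DecidableEq

structure JSBAF (A : Type) where
  att : A → A → Prop
  supp : Set A → A → Prop
  pref : A → A → Prop

variable {A : Type}

/-- Strict arguments: supported by the empty set or only by strict arguments. -/
inductive Strict (J : JSBAF A) : A → Prop
  | mk (S : Set A) (a : A) (h : J.supp S a) (hS : ∀ b ∈ S, Strict J b) : Strict J a

/-- Structural restrictions on JSBAFs. -/
structure Restr (J : JSBAF A) : Prop where
  finSupp : ∀ S b, J.supp S b → S.Finite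
  uniqSupp : ∀ S S' b, J.supp S b → J.supp S' b → S = S'
  acyc : ∀ a, ¬ Relation.TransGen (fun x y => ∃ S, J.supp S y ∧ x ∈ S) a a
  strictUnatt : ∀ a b, Strict J b → ¬ J.att a b
  prefRefl : ∀ a, J.pref a a
  prefTrans : ∀ a b c, J.pref a b → J.pref b c → J.pref a c
  prefTotal : ∀ a b, J.pref a b ∨ J.pref b a
  strictEq : ∀ a b, Strict J a → Strict J b → J.pref a b
  strictTop : ∀ a b, ¬ Strict J a → Strict J b → J.pref a b ∧ ¬ J.pref b a

def inL (L : A → Lab) : Set A := {a | L a = Lab.IN}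
def outL (L : A → Lab) : Set A := {a | L a = Lab.OUT}
def undecL (L : A → Lab) : Set A := {a | L a = Lab.UNDEC}

/-- Definition 2, item 1: legally IN. -/
def legallyIn (J : JSBAF A) (L : A → Lab) (a : A) : Prop :=
  (∀ b, J.att b a → L b = Lab.OUT) ∧
  ∀ S c, J.supp S c → a ∈ S → (∀ b ∈ S, b ≠ a → J.pref a b) →
    (L c = Lab.IN ∨
     (L c = Lab.UNDEC ∧ ∃ b ∈ S, b ≠ a ∧ (L b = Lab.OUT ∨ L b = Lab.UNDEC)) ∨
     (L c = Lab.OUT ∧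
       ((∃ b ∈ S, b ≠ a ∧ L b = Lab.OUT) ∨
        (∃ b₁ ∈ S, ∃ b₂ ∈ S, b₁ ≠ a ∧ b₂ ≠ a ∧ b₁ ≠ b₂ ∧
          L b₁ = Lab.UNDEC ∧ L b₂ = Lab.UNDEC))))

/-- Definition 2, item 2: legally OUT. -/
def legallyOut (J : JSBAF A) (L : A → Lab) (a : A) : Prop :=
  (∃ b, J.att b a ∧ L b = Lab.IN) ∨
  (∃ (n : ℕ) (S : ℕ → Set A) (b : ℕ → A),
    (∀ i ≤ n, J.supp (S i) (b i)) ∧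
    (∀ i < n, b i ∈ S (i + 1)) ∧
    a ∈ S 0 ∧
    (∀ d ∈ S 0, d ≠ a → L d = Lab.IN) ∧
    (∃ c, J.att c (b n) ∧ L c = Lab.IN) ∧
    (∀ i ≤ n, L (b i) = Lab.OUT) ∧
    (∀ i, 1 ≤ i → i ≤ n → ∀ d ∈ S i, d ≠ b (i - 1) → L d = Lab.IN) ∧
    (∀ d ∈ S 0, d ≠ a → J.pref a d))

/-- Admissible labelings. -/
def Admissible (J : JSBAF A) (L : A → Lab) : Prop :=
  (∀ a, L a = Lab.IN → legallyIn J L a) ∧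
  (∀ a, L a = Lab.OUT ↔ legallyOut J L a) ∧
  (∀ a, Strict J a → L a = Lab.IN)

/-- Preferred labelings: maximal admissible w.r.t. inclusion of IN-sets. -/
def Preferred (J : JSBAF A) (L : A → Lab) : Prop :=
  Admissible J L ∧ ∀ L', Admissible J L' → ¬ (inL L ⊂ inL L')

/-- The iterated OUT-sets of the SIM labeling. -/
def simO (J : JSBAF A) : ℕ → Set A
  | 0 => {a | ∃ b, Strict J b ∧ J.att b a}
  | n + 1 => simO J n ∪
      {a | ∃ S c, J.supp S c ∧ a ∈ S ∧ c ∈ simO J n ∧ ∀ d ∈ S, d ≠ a → Strict J d}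

def simIn (J : JSBAF A) : Set A := {a | Strict J a}
def simOut (J : JSBAF A) : Set A := ⋃ n, simO J n

open Classical in
/-- The strict-including-minimal labeling. -/
noncomputable def SIM (J : JSBAF A) : A → Lab := fun a =>
  if Strict J a then Lab.IN else if a ∈ simOut J then Lab.OUT else Lab.UNDEC

/-- The order on labelings. -/
def leL (L₁ L₂ : A → Lab) : Prop := inL L₁ ⊆ inL L₂ ∧ outL L₁ ⊆ outL L₂

end JS

open JS

lemma not_strict_of_simO {A : Type} (J : JSBAF A) (hR : Restr J) :
    ∀ n, ∀ a ∈ simO J n, ¬ Strict J a := by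
  intro n
  induction n with
  | zero =>
    rintro a ⟨b, hb, hatt⟩ hs
    exact hR.strictUnatt b a hs hatt
  | succ n ih =>
    rintro a (ha | ⟨S, c, hsupp, haS, hc, hstr⟩) hs
    · exact ih a ha hs
    · have hcS : Strict J c := by
        refine Strict.mk S c hsupp ?_
        intro d hd
        by_cases hda : d = a
        · subst hda; exact hs
        · exact hstr d hd hda
      exact ih c hc hcS

lemma SIM_IN_iff {A : Type} (J : JSBAF A) (a : A) :
    SIM J a = Lab.IN ↔ Strict J a := by
  classical
  unfold SIM
  split
  · simp_all
  · split <;> simp_all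

lemma SIM_OUT_iff {A : Type} (J : JSBAF A) (hR : Restr J) (a : A) :
    SIM J a = Lab.OUT ↔ a ∈ simOut J := by
  classical
  constructor
  · intro h
    unfold SIM at h
    split at h
    · simp_all
    · split at h
      · assumption
      · simp_all
  · intro h
    have hns : ¬ Strict J a := by
      rcases Set.mem_iUnion.mp h with ⟨n, hn⟩
      exact not_strict_of_simO J hR n a hn
    unfold SIM
    rw [if_neg hns, if_pos h]

lemma legallyOut_of_simO {A : Type} (J : JSBAF A) (hR : Restr J) :
    ∀ n, ∀ a ∈ simO J n, legallyOut J (SIM J) a := by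
  intro n
  induction n with
  | zero =>
    rintro a ⟨b, hb, hatt⟩
    exact Or.inl ⟨b, hatt, (SIM_IN_iff J b).mpr hb⟩
  | succ n ih =>
    rintro a (ha | ⟨S, c, hsupp, haS, hc, hstr⟩)
    · exact ih a ha
    · have hna : ¬ Strict J a := by
        apply not_strict_of_simO J hR (n + 1) a
        exact Or.inr ⟨S, c, hsupp, haS, hc, hstr⟩
      have hcOut : SIM J c = Lab.OUT :=
        (SIM_OUT_iff J hR c).mpr (Set.mem_iUnion.mpr ⟨n, hc⟩)
      have hSIN : ∀ d ∈ S, d ≠ a → SIM J d = Lab.IN := fun d hd hda =>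
        (SIM_IN_iff J d).mpr (hstr d hd hda)
      have hSpref : ∀ d ∈ S, d ≠ a → J.pref a d := fun d hd hda =>
        (hR.strictTop a d hna (hstr d hd hda)).1
      rcases ih c hc with ⟨b, hatt, hbIN⟩ | ⟨m, T, bb, h1, h2, h3, h4, h5, h6, h7, h8⟩
      · -- chain of length 0
        refine Or.inr ⟨0, fun _ => S, fun _ => c, ?_, ?_, haS, hSIN, ⟨b, hatt, hbIN⟩, ?_, ?_, hSpref⟩
        · intro i _; exact hsupp
        · intro i hi; omega
        · intro i _; exact hcOut
        · intro i hi1 hi0; omega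
      · -- prepend S to c's chain
        refine Or.inr ⟨m + 1,
          (fun i => if i = 0 then S else T (i - 1)),
          (fun i => if i = 0 then c else bb (i - 1)), ?_, ?_, ?_, ?_, ?_, ?_, ?_, ?_⟩
        · intro i hi
          by_cases h0 : i = 0
          · simp [h0]; exact hsupp
          · simp [h0]; exact h1 (i - 1) (by omega)
        · intro i hi
          by_cases h0 : i = 0
          · subst h0; simp; exact h3
          · simp [h0]
            have := h2 (i - 1) (by omega)
            rwa [show i - 1 + 1 = i by omega] at this
        · simpa using haS
        · simpa using hSIN
        · simp; exact h5
        · intro i hi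
          by_cases h0 : i = 0
          · simp [h0]; exact hcOut
          · simp [h0]; exact h6 (i - 1) (by omega)
        · intro i hi1 hi2 d hd hdb
          have h0 : ¬ (i = 0) := by omega
          simp [h0] at hd
          by_cases h1' : i = 1
          · subst h1'
            simp at hd hdb
            exact h4 d hd hdb
          · have : ¬ (i - 1 = 0) := by omega
            simp [this] at hdb
            have := h7 (i - 1) (by omega) (by omega) d hd
            rw [show i - 1 - 1 = i - 2 by omega] at this
            rw [show i - 1 - 1 = i - 2 by omega] at hdb
            exact this hdb
        · simpa using hSpref

lemma simO_of_legallyOut {A : Type} (J : JSBAF A) (hR : Restr J) (a : A)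
    (h : legallyOut J (SIM J) a) : a ∈ simOut J := by
  rcases h with ⟨b, hatt, hbIN⟩ | ⟨m, T, bb, h1, h2, h3, h4, h5, h6, h7, h8⟩
  · exact Set.mem_iUnion.mpr ⟨0, ⟨b, (SIM_IN_iff J b).mp hbIN, hatt⟩⟩
  · have key : ∀ k, k ≤ m → bb (m - k) ∈ simO J k := by
      intro k
      induction k with
      | zero =>
        intro _
        rcases h5 with ⟨c, hattc, hcIN⟩
        exact ⟨c, (SIM_IN_iff J c).mp hcIN, by simpa using hattc⟩
      | succ k ihk =>
        intro hk
        refine Or.inr ⟨T (m - k), bb (m - k), h1 (m - k) (by omega), ?_, ihk (by omega), ?_⟩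
        · have := h2 (m - (k + 1)) (by omega)
          rwa [show m - (k + 1) + 1 = m - k by omega] at this
        · intro d hd hdne
          have := h7 (m - k) (by omega) (by omega) d hd
          rw [show m - k - 1 = m - (k + 1) by omega] at this
          exact (SIM_IN_iff J d).mp (this hdne)
    have hb0 : bb 0 ∈ simO J m := by
      have := key m le_rfl
      simpa using this
    refine Set.mem_iUnion.mpr ⟨m + 1, Or.inr ⟨T 0, bb 0, h1 0 (by omega), h3, hb0, ?_⟩⟩
    intro d hd hdne
    exact (SIM_IN_iff J d).mp (h4 d hd hdne)

open JS in
/-- Every JSBAF satisfying the structural restrictions has at least one admissible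
labeling. -/
theorem admissible_nonempty {A : Type} (J : JSBAF A) (hR : Restr J) :
    ∃ L : A → Lab, Admissible J L := by
  refine ⟨SIM J, ?_, ?_, ?_⟩
  · -- legally IN
    intro a ha
    have hsa : Strict J a := (SIM_IN_iff J a).mp ha
    constructor
    · intro b hatt
      exact absurd hatt (hR.strictUnatt b a hsa)
    · intro S c hsupp haS hpref
      left
      rw [SIM_IN_iff]
      refine Strict.mk S c hsupp ?_
      intro d hd
      by_cases hda : d = a
      · subst hda; exact hsa
      · by_contra hds
        exact (hR.strictTop d a hds hsa).2 (hpref d hd hda)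
  · -- OUT iff legallyOut
    intro a
    constructor
    · intro h
      rcases Set.mem_iUnion.mp ((SIM_OUT_iff J hR a).mp h) with ⟨n, hn⟩
      exact legallyOut_of_simO J hR n a hn
    · intro h
      exact (SIM_OUT_iff J hR a).mpr (simO_of_legallyOut J hR a h)
  · -- strict args IN
    intro a hs
    exact (SIM_IN_iff J a).mpr hs
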